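/- Let τ < θ be reals, let D(t) be a continuous matrix-valued function on [τ,θ] mapping ℝˡ to ℝⁿ, and let Ψ : C([τ,θ], ℝˡ) → ℝⁿ be a linear map satisfying |Ψ(q)| ≤ C_Ψ ‖q‖_{i,τ,θ} for all continuous q, where C_Ψ > 0. Let C_D > 0 be such that ‖Dq‖_{i,τ,θ} ≤ C_D ‖q‖_{i,τ,θ} for all continuous q (e.g. C_D = max_{t∈[τ,θ]} ‖D(t)‖). Suppose the continuous functions Δp and q satisfy |Ψ(Δp)| ≥ β ‖DΔp‖_{i,τ,θ} for some β > 0, together with ‖q‖_{i,τ,θ} ≤ β‖DΔp‖_{i,τ,θ}/(2C_Ψ) and ‖q‖_{i,τ,θ} ≤ ‖DΔp‖_{i,τ,θ}/C_D. Then |Ψ(Δp + q)| ≥ (β/4) ‖D(Δp + q)‖_{i,τ,θ}. -/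

import Mathlib

open Set Filter Asymptotics MeasureTheory

/-- Euclidean norm of a vector in `ℝˡ`. -/
noncomputable def euclNorm {l : ℕ} (v : Fin l → ℝ) : ℝ := Real.sqrt (∑ i, v i ^ 2)

/-- `‖q‖_{i,a,b} = ∫_a^b |q(t)| dt`. -/
noncomputable def intNorm {l : ℕ} (a b : ℝ) (q : ℝ → Fin l → ℝ) : ℝ :=
  ∫ t in a..b, euclNorm (q t)

lemma euclNorm_eq {l : ℕ} (v : Fin l → ℝ) :
    euclNorm v = ‖(WithLp.equiv 2 (Fin l → ℝ)).symm v‖ := by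
  rw [EuclideanSpace.norm_eq]
  simp [euclNorm, sq_abs]

lemma euclNorm_nonneg {l : ℕ} (v : Fin l → ℝ) : 0 ≤ euclNorm v := Real.sqrt_nonneg _

lemma euclNorm_add_le {l : ℕ} (a b : Fin l → ℝ) :
    euclNorm (a + b) ≤ euclNorm a + euclNorm b := by
  rw [euclNorm_eq, euclNorm_eq, euclNorm_eq]
  exact norm_add_le _ _

lemma euclNorm_neg {l : ℕ} (a : Fin l → ℝ) : euclNorm (-a) = euclNorm a := by
  simp [euclNorm]

lemma continuous_euclNorm {l : ℕ} : Continuous (euclNorm (l := l)) := by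
  unfold euclNorm
  exact Real.continuous_sqrt.comp (continuous_finset_sum _ fun i _ => (continuous_apply i).pow 2)

lemma mulVec_contOn {n l : ℕ} {τ θ : ℝ} (D : ℝ → Matrix (Fin n) (Fin l) ℝ)
    (hD : ∀ i j, ContinuousOn (fun t => D t i j) (Set.Icc τ θ))
    (f : ℝ → Fin l → ℝ) (hf : ContinuousOn f (Set.Icc τ θ)) :
    ContinuousOn (fun t => euclNorm ((D t).mulVec (f t))) (Set.Icc τ θ) := by
  apply continuous_euclNorm.comp_continuousOn
  apply continuousOn_pi.2
  intro i
  simp only [Matrix.mulVec, dotProduct]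
  exact continuousOn_finset_sum _ fun j _ =>
    (hD i j).mul ((continuous_apply j).comp_continuousOn hf)

lemma mulVec_intInt {n l : ℕ} {τ θ : ℝ} (hτθ : τ ≤ θ) (D : ℝ → Matrix (Fin n) (Fin l) ℝ)
    (hD : ∀ i j, ContinuousOn (fun t => D t i j) (Set.Icc τ θ))
    (f : ℝ → Fin l → ℝ) (hf : ContinuousOn f (Set.Icc τ θ)) :
    IntervalIntegrable (fun t => euclNorm ((D t).mulVec (f t))) MeasureTheory.volume τ θ := by
  apply ContinuousOn.intervalIntegrable
  rw [Set.uIcc_of_le hτθ]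
  exact mulVec_contOn D hD f hf

theorem stmt13 (n l : ℕ) (τ θ : ℝ) (hτθ : τ < θ)
    (D : ℝ → Matrix (Fin n) (Fin l) ℝ)
    (hD : ∀ i j, ContinuousOn (fun t => D t i j) (Set.Icc τ θ))
    (Ψ : (ℝ → Fin l → ℝ) → (Fin n → ℝ))
    (hΨadd : ∀ f g : ℝ → Fin l → ℝ, Ψ (fun t => f t + g t) = Ψ f + Ψ g)
    (hΨsmul : ∀ (c : ℝ) (f : ℝ → Fin l → ℝ), Ψ (fun t => c • f t) = c • Ψ f)
    (CΨ : ℝ) (hCΨ : 0 < CΨ)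
    (hΨbound : ∀ q : ℝ → Fin l → ℝ, ContinuousOn q (Set.Icc τ θ) →
      euclNorm (Ψ q) ≤ CΨ * intNorm τ θ q)
    (CD : ℝ) (hCD : 0 < CD)
    (hDbound : ∀ q : ℝ → Fin l → ℝ, ContinuousOn q (Set.Icc τ θ) →
      (∫ t in τ..θ, euclNorm ((D t).mulVec (q t))) ≤ CD * intNorm τ θ q)
    (Δp q : ℝ → Fin l → ℝ)
    (hΔpc : ContinuousOn Δp (Set.Icc τ θ)) (hqc : ContinuousOn q (Set.Icc τ θ))
    (β : ℝ) (hβ : 0 < β)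
    (hΨΔp : euclNorm (Ψ Δp) ≥ β * ∫ t in τ..θ, euclNorm ((D t).mulVec (Δp t)))
    (hq1 : intNorm τ θ q ≤ β * (∫ t in τ..θ, euclNorm ((D t).mulVec (Δp t))) / (2 * CΨ))
    (hq2 : intNorm τ θ q ≤ (∫ t in τ..θ, euclNorm ((D t).mulVec (Δp t))) / CD) :
    euclNorm (Ψ (fun t => Δp t + q t)) ≥
      (β / 4) * ∫ t in τ..θ, euclNorm ((D t).mulVec (Δp t + q t)) := by
  set A : ℝ := ∫ t in τ..θ, euclNorm ((D t).mulVec (Δp t)) with hAdef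
  have hA0 : 0 ≤ A :=
    intervalIntegral.integral_nonneg hτθ.le fun t _ => euclNorm_nonneg _
  -- bound on Ψ q
  have hΨq : euclNorm (Ψ q) ≤ β * A / 2 := by
    have h1 := hΨbound q hqc
    have h2 : CΨ * intNorm τ θ q ≤ CΨ * (β * A / (2 * CΨ)) :=
      mul_le_mul_of_nonneg_left hq1 hCΨ.le
    have h3 : CΨ * (β * A / (2 * CΨ)) = β * A / 2 := by
      field_simp
    linarith
  -- lower bound for LHS
  have hsum : euclNorm (Ψ (fun t => Δp t + q t)) ≥ β * A / 2 := by
    rw [hΨadd Δp q]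
    have htri : euclNorm (Ψ Δp) ≤ euclNorm (Ψ Δp + Ψ q) + euclNorm (Ψ q) := by
      have := euclNorm_add_le (Ψ Δp + Ψ q) (-(Ψ q))
      simpa [euclNorm_neg] using this
    linarith
  -- bound on ∫ Dq
  have hDq : (∫ t in τ..θ, euclNorm ((D t).mulVec (q t))) ≤ A := by
    have h1 := hDbound q hqc
    have h2 : CD * intNorm τ θ q ≤ CD * (A / CD) := mul_le_mul_of_nonneg_left hq2 hCD.le
    have h3 : CD * (A / CD) = A := by field_simp
    linarith
  -- integral triangle
  have hint : (∫ t in τ..θ, euclNorm ((D t).mulVec (Δp t + q t))) ≤ 2 * A := by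
    have hpt : ∀ t ∈ Set.Icc τ θ,
        euclNorm ((D t).mulVec (Δp t + q t)) ≤
          euclNorm ((D t).mulVec (Δp t)) + euclNorm ((D t).mulVec (q t)) := by
      intro t _
      rw [Matrix.mulVec_add]
      exact euclNorm_add_le _ _
    have hi1 := mulVec_intInt hτθ.le D hD Δp hΔpc
    have hi2 := mulVec_intInt hτθ.le D hD q hqc
    have hiS : IntervalIntegrable
        (fun t => euclNorm ((D t).mulVec (Δp t)) + euclNorm ((D t).mulVec (q t)))
        MeasureTheory.volume τ θ := hi1.add hi2
    have hiL : IntervalIntegrable (fun t => euclNorm ((D t).mulVec (Δp t + q t)))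
        MeasureTheory.volume τ θ := by
      have := mulVec_intInt hτθ.le D hD (fun t => Δp t + q t) (hΔpc.add hqc)
      simpa using this
    have hle := intervalIntegral.integral_mono_on hτθ.le hiL hiS hpt
    have hadd := intervalIntegral.integral_add hi1 hi2
    rw [hadd] at hle
    linarith
  have hfinal : (β / 4) * (∫ t in τ..θ, euclNorm ((D t).mulVec (Δp t + q t))) ≤ β * A / 2 := by
    have hI0 : 0 ≤ ∫ t in τ..θ, euclNorm ((D t).mulVec (Δp t + q t)) :=
      intervalIntegral.integral_nonneg (μ := MeasureTheory.volume) hτθ.le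
        (fun t _ => euclNorm_nonneg ((D t).mulVec (Δp t + q t)))
    nlinarith
  linarith
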